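/- Let φ: ℝ → ℝ be Lipschitz and bounded below. Then for every compact set K ⊂ ℝ, sup_{x∈K} |M^λφ(x) − Mφ(x)| → 0 as λ → 0⁺, where M is the classical nonlocal operator. -/

import Mathlib

open MeasureTheory ProbabilityTheory Real Filter
open scoped Classical

noncomputable section

/-- The Gaussian measure `Φ_x` on `ℝ` with mean `-x` and variance `1`. -/
def Phi (x : ℝ) : Measure ℝ := gaussianReal (-x) 1

instance (x : ℝ) : IsProbabilityMeasure (Phi x) :=
  inferInstanceAs (IsProbabilityMeasure (gaussianReal (-x) 1))

lemma cont_of_abs_lip {L : ℝ} {f : ℝ → ℝ} (h : ∀ a b, |f a - f b| ≤ L * |a - b|) :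
    Continuous f := by
  have hL : 0 ≤ L := by
    have h1 := h 1 0
    have h2 := abs_nonneg (f 1 - f 0)
    simp at h1
    linarith
  have hlip : LipschitzWith ⟨L, hL⟩ f := by
    apply LipschitzWith.of_dist_le_mul
    intro a b
    rw [Real.dist_eq, Real.dist_eq]; exact h a b
  exact hlip.continuous

lemma gibbs_nonneg (μ ν : Measure ℝ) [IsProbabilityMeasure μ] [IsProbabilityMeasure ν]
    (hac : μ ≪ ν)
    (hint : Integrable (fun ξ => Real.log ((μ.rnDeriv ν ξ).toReal)) μ) :
    0 ≤ ∫ ξ, Real.log ((μ.rnDeriv ν ξ).toReal) ∂μ := by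
  set g : ℝ → ℝ := fun ξ => (μ.rnDeriv ν ξ).toReal with hg
  have hmul : ∫ ξ, g ξ * Real.log (g ξ) ∂ν = ∫ ξ, Real.log (g ξ) ∂μ := by
    simpa [smul_eq_mul] using
      MeasureTheory.integral_rnDeriv_smul (f := fun ξ => Real.log (g ξ)) hac
  have hint' : Integrable (fun ξ => g ξ * Real.log (g ξ)) ν := by
    simpa [smul_eq_mul] using
      (MeasureTheory.integrable_rnDeriv_smul_iff (f := fun ξ => Real.log (g ξ)) hac).mpr hint
  have hg_int : Integrable g ν := Measure.integrable_toReal_rnDeriv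
  have hpt : ∀ ξ, g ξ - 1 ≤ g ξ * Real.log (g ξ) := by
    intro ξ
    rcases eq_or_lt_of_le (ENNReal.toReal_nonneg : (0:ℝ) ≤ g ξ) with h | h
    · have hz : g ξ = 0 := h.symm
      rw [hz]; norm_num
    · have h1 : Real.log (g ξ)⁻¹ ≤ (g ξ)⁻¹ - 1 := Real.log_le_sub_one_of_pos (inv_pos.2 h)
      rw [Real.log_inv] at h1
      have h2 : 1 - (g ξ)⁻¹ ≤ Real.log (g ξ) := by linarith
      have h3 := mul_le_mul_of_nonneg_left h2 h.le
      have h4 : g ξ * (1 - (g ξ)⁻¹) = g ξ - 1 := by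
        rw [mul_sub, mul_one, mul_inv_cancel₀ (h.ne' : g ξ ≠ 0)]
      linarith
  have h1 : ∫ ξ, (g ξ - 1) ∂ν ≤ ∫ ξ, g ξ * Real.log (g ξ) ∂ν :=
    integral_mono (hg_int.sub (integrable_const 1)) hint' hpt
  have h2 : ∫ ξ, (g ξ - 1) ∂ν = 0 := by
    rw [integral_sub hg_int (integrable_const 1), Measure.integral_toReal_rnDeriv hac]
    simp
  linarith [hmul ▸ h1]

/-- Extended-real value of `∫ f dμ`: the Bochner integral when `f` is integrable,
and `+∞` otherwise (the appropriate convention for functions bounded below). -/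
def eInt (f : ℝ → ℝ) (μ : Measure ℝ) : EReal :=
  if Integrable f μ then ((∫ ξ, f ξ ∂μ : ℝ) : EReal) else ⊤

/-- Kullback–Leibler divergence `D_KL(μ‖ν) = ∫ log (dμ/dν) dμ`, equal to `+∞` if `μ` is
not absolutely continuous with respect to `ν` (or if the integral does not exist). -/
def klDiv' (μ ν : Measure ℝ) : EReal :=
  if μ ≪ ν ∧ Integrable (fun ξ => Real.log ((μ.rnDeriv ν ξ).toReal)) μ
  then ((∫ ξ, Real.log ((μ.rnDeriv ν ξ).toReal) ∂μ : ℝ) : EReal) else ⊤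

/-- The randomized nonlocal operator `M^λ`. -/
def Mlam (l : ℝ → ℝ) (lam : ℝ) (φ : ℝ → ℝ) (x : ℝ) : EReal :=
  ⨅ μ : {μ : Measure ℝ // IsProbabilityMeasure μ ∧ μ ≪ Phi x},
    eInt (fun ξ => φ (x + ξ) + l ξ) μ.1 + (lam : EReal) * klDiv' μ.1 (Phi x)

/-- The classical nonlocal operator `M`. -/
def Mcl (l : ℝ → ℝ) (φ : ℝ → ℝ) (x : ℝ) : ℝ := ⨅ ξ : ℝ, (φ (x + ξ) + l ξ)

/-- `φ` is bounded from below. -/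
def BddBelowFun (φ : ℝ → ℝ) : Prop := ∃ m : ℝ, ∀ y, m ≤ φ y

/-- `φ` is of polynomial growth. -/
def PolyGrowth (φ : ℝ → ℝ) : Prop :=
  ∃ β : ℝ, 0 ≤ β ∧ ∃ C : ℝ, ∀ y : ℝ, |φ y| ≤ C * (1 + |y| ^ β)

/-- The standing hypotheses on the intervention cost `l`. -/
structure CostHyp (l : ℝ → ℝ) (K Ll : ℝ) : Prop where
  K_pos : 0 < K
  l_zero : l 0 = K
  l_lb : ∀ x, K ≤ l x
  l_subadd : ∀ x y, l (x + y) + K ≤ l x + l y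
  l_coercive : Filter.Tendsto l (Filter.cocompact ℝ) Filter.atTop
  Ll_pos : 0 < Ll
  l_lip : ∀ x y, |l x - l y| ≤ Ll * |x - y|

set_option maxHeartbeats 1000000 in
/-- `sup_{x∈K} |M^λφ(x) − Mφ(x)| → 0` as `λ → 0⁺`, for every compact
`K ⊂ ℝ` (uniform convergence stated in ε-δ form, with the absolute-value bound in
`EReal` expressed by the two one-sided bounds). -/
theorem stmt_11 (l : ℝ → ℝ) (K Ll : ℝ) (hl : CostHyp l K Ll)
    (φ : ℝ → ℝ) (hφlip : ∃ Lφ : ℝ, ∀ a b, |φ a - φ b| ≤ Lφ * |a - b|)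
    (hφb : BddBelowFun φ)
    (Kset : Set ℝ) (hKc : IsCompact Kset) :
    ∀ ε : ℝ, 0 < ε → ∃ δ : ℝ, 0 < δ ∧ ∀ lam : ℝ, 0 < lam → lam < δ → ∀ x ∈ Kset,
      Mlam l lam φ x ≤ ((Mcl l φ x + ε : ℝ) : EReal) ∧
      ((Mcl l φ x - ε : ℝ) : EReal) ≤ Mlam l lam φ x := by
  obtain ⟨Lφ, hLφ⟩ := hφlip
  obtain ⟨m, hm⟩ := hφb
  have hφcont : Continuous φ := cont_of_abs_lip hLφ
  have hLφ0 : 0 ≤ Lφ := by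
    have h1 := hLφ 1 0
    have h2 := abs_nonneg (φ 1 - φ 0)
    simp at h1
    linarith
  have hfb : ∀ x ξ : ℝ, m + K ≤ φ (x + ξ) + l ξ := fun x ξ => add_le_add (hm _) (hl.l_lb _)
  have hbdd : ∀ x : ℝ, BddBelow (Set.range fun ξ : ℝ => φ (x + ξ) + l ξ) :=
    fun x => ⟨m + K, by rintro y ⟨ξ, rfl⟩; exact hfb x ξ⟩
  have hMcl_le : ∀ x ξ : ℝ, Mcl l φ x ≤ φ (x + ξ) + l ξ := fun x ξ => ciInf_le (hbdd x) ξ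
  intro ε hε
  obtain ⟨Rx, hRx⟩ : ∃ R : ℝ, ∀ x ∈ Kset, |x| ≤ R := by
    obtain ⟨r, hr⟩ := hKc.isBounded.subset_closedBall 0
    exact ⟨r, fun x hx => by simpa [Real.dist_eq] using hr hx⟩
  obtain ⟨Cφ, hCφ⟩ : ∃ C : ℝ, ∀ x ∈ Kset, φ x ≤ C := by
    rcases (hKc.image hφcont).bddAbove with ⟨C, hC⟩
    exact ⟨C, fun x hx => hC (Set.mem_image_of_mem φ hx)⟩
  obtain ⟨B, hB⟩ : ∃ y : ℝ, y = Cφ + K + ε - m + 1 := ⟨_, rfl⟩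
  obtain ⟨R, hR⟩ : ∃ R : ℝ, ∀ ξ : ℝ, l ξ < B → |ξ| ≤ R := by
    have hev : ∀ᶠ ξ in cocompact ℝ, B ≤ l ξ := hl.l_coercive.eventually (eventually_ge_atTop B)
    obtain ⟨S, hScomp, hS⟩ := hasBasis_cocompact.eventually_iff.mp hev
    obtain ⟨r, hr⟩ := hScomp.isBounded.subset_closedBall 0
    refine ⟨r, fun ξ hξ => ?_⟩
    by_cases hmem : ξ ∈ S
    · simpa [Real.dist_eq] using hr hmem
    · exact absurd (hS hmem) (not_le.2 hξ)
  obtain ⟨A, hA⟩ : ∃ y : ℝ, y = Lφ + Ll + 1 := ⟨_, rfl⟩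
  have hA0 : 0 < A := by have := hl.Ll_pos; rw [hA]; linarith
  obtain ⟨η, hη⟩ : ∃ y : ℝ, y = min 1 (ε / (4 * A)) := ⟨_, rfl⟩
  have hη0 : 0 < η := by rw [hη]; exact lt_min one_pos (by positivity)
  have hη1 : η ≤ 1 := by rw [hη]; exact min_le_left _ _
  obtain ⟨R', hR'⟩ : ∃ y : ℝ, y = R + 1 + Rx := ⟨_, rfl⟩
  obtain ⟨c0, hc0⟩ : ∃ y : ℝ, y = (Real.sqrt (2 * π))⁻¹ * Real.exp (-(R' ^ 2) / 2) := ⟨_, rfl⟩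
  have hc00 : 0 < c0 := by rw [hc0]; positivity
  obtain ⟨p, hp⟩ : ∃ y : ℝ, y = c0 * (2 * η) := ⟨_, rfl⟩
  have hp0 : 0 < p := by rw [hp]; positivity
  obtain ⟨D, hD⟩ : ∃ y : ℝ, y = max (Real.log p⁻¹) 0 + 1 := ⟨_, rfl⟩
  have hD0 : 0 < D := by
    have := le_max_right (Real.log p⁻¹) (0 : ℝ)
    rw [hD]; linarith
  refine ⟨ε / 2 / D, by positivity, fun lam hlam hlamδ x hx => ?_⟩
  constructor
  · -- upper bound
    have hMdef : Mcl l φ x = ⨅ ξ : ℝ, (φ (x + ξ) + l ξ) := rfl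
    obtain ⟨ξ₀, hξ₀⟩ : ∃ ξ₀ : ℝ, φ (x + ξ₀) + l ξ₀ < Mcl l φ x + ε / 4 := by
      apply exists_lt_of_ciInf_lt
      rw [← hMdef]; linarith
    have hξ₀R : |ξ₀| ≤ R := by
      apply hR
      have h1 : Mcl l φ x ≤ φ x + K := by
        have := hMcl_le x 0
        simpa [hl.l_zero] using this
      have h2 := hm (x + ξ₀)
      have h3 := hCφ x hx
      rw [hB]; linarith
    obtain ⟨I, hIdef⟩ : ∃ y : Set ℝ, y = Set.Icc (ξ₀ - η) (ξ₀ + η) := ⟨_, rfl⟩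
    have hImeas : MeasurableSet I := by rw [hIdef]; exact measurableSet_Icc
    have habs : ∀ ξ ∈ I, |ξ + x| ≤ R' := by
      intro ξ hξ
      rw [hIdef] at hξ
      obtain ⟨h1, h2⟩ := hξ
      have hxR := abs_le.mp (hRx x hx)
      have hξ₀R' := abs_le.mp hξ₀R
      rw [hR', abs_le]
      constructor
      · linarith [hxR.1, hξ₀R'.1]
      · linarith [hxR.2, hξ₀R'.2]
    have hPhieq : Phi x = gaussianReal (-x) 1 := rfl
    have hPhiI : ENNReal.ofReal p ≤ Phi x I := by
      rw [hPhieq, gaussianReal_apply _ one_ne_zero I]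
      have hvol : volume I = ENNReal.ofReal (2 * η) := by
        rw [hIdef, Real.volume_Icc, show ξ₀ + η - (ξ₀ - η) = 2 * η by ring]
      calc ENNReal.ofReal p = ENNReal.ofReal c0 * ENNReal.ofReal (2 * η) := by
            rw [hp, ENNReal.ofReal_mul hc00.le]
        _ = ENNReal.ofReal c0 * volume I := by rw [hvol]
        _ = ∫⁻ _ in I, ENNReal.ofReal c0 := (setLIntegral_const I _).symm
        _ ≤ ∫⁻ ξ in I, gaussianPDF (-x) 1 ξ := by
            refine setLIntegral_mono (measurable_gaussianPDF _ _) fun ξ hξ => ?_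
            show ENNReal.ofReal c0 ≤ ENNReal.ofReal (gaussianPDFReal (-x) 1 ξ)
            refine ENNReal.ofReal_le_ofReal ?_
            unfold gaussianPDFReal
            simp only [NNReal.coe_one, mul_one]
            have hsq : (ξ - -x) ^ 2 ≤ R' ^ 2 := by
              rw [show ξ - -x = ξ + x by ring, ← sq_abs (ξ + x)]
              exact pow_le_pow_left₀ (abs_nonneg _) (habs ξ hξ) 2
            rw [hc0]
            exact mul_le_mul_of_nonneg_left (Real.exp_le_exp.2 (by nlinarith))
              (inv_nonneg.2 (Real.sqrt_nonneg _))
    have hI0 : Phi x I ≠ 0 := by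
      intro h0
      rw [h0] at hPhiI
      have hpos := ENNReal.ofReal_pos.mpr hp0
      exact absurd (le_antisymm hPhiI zero_le) hpos.ne'
    have hIfin : Phi x I ≠ ⊤ := measure_ne_top _ _
    obtain ⟨c, hc⟩ : ∃ y : ENNReal, y = (Phi x I)⁻¹ := ⟨_, rfl⟩
    have hcfin : c ≠ ⊤ := by rw [hc]; exact ENNReal.inv_ne_top.2 hI0
    obtain ⟨μ₀, hμ₀⟩ : ∃ y : Measure ℝ, y = c • (Phi x).restrict I := ⟨_, rfl⟩
    haveI hprob : IsProbabilityMeasure μ₀ := by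
      constructor
      rw [hμ₀, Measure.smul_apply, Measure.restrict_apply_univ, smul_eq_mul, hc]
      exact ENNReal.inv_mul_cancel hI0 hIfin
    have hac : μ₀ ≪ Phi x := by
      rw [hμ₀]
      exact (Measure.absolutelyContinuous_of_le Measure.restrict_le_self).smul_left c
    obtain ⟨q, hq⟩ : ∃ y : ℝ, y = (Phi x I).toReal := ⟨_, rfl⟩
    have hpq : p ≤ q := by rw [hq]; exact (ENNReal.ofReal_le_iff_le_toReal hIfin).mp hPhiI
    have hq0 : 0 < q := lt_of_lt_of_le hp0 hpq
    have hmemI : ∀ᵐ ξ ∂μ₀, ξ ∈ I := by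
      rw [hμ₀]; exact Measure.ae_smul_measure (ae_restrict_mem hImeas) c
    have hrnμ : ∀ᵐ ξ ∂μ₀, Real.log ((μ₀.rnDeriv (Phi x) ξ).toReal) = -Real.log q := by
      have hrn1 : μ₀.rnDeriv (Phi x) =ᵐ[Phi x] c • ((Phi x).restrict I).rnDeriv (Phi x) := by
        rw [hμ₀]; exact Measure.rnDeriv_smul_left_of_ne_top _ _ hcfin
      have hrn2 : ((Phi x).restrict I).rnDeriv (Phi x) =ᵐ[Phi x] I.indicator 1 :=
        Measure.rnDeriv_restrict_self _ hImeas
      have hrn3 : μ₀.rnDeriv (Phi x) =ᵐ[Phi x] fun ξ => c * I.indicator 1 ξ := by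
        refine hrn1.trans ?_
        filter_upwards [hrn2] with ξ h
        simp [Pi.smul_apply, h, smul_eq_mul]
      have hrn4 : μ₀.rnDeriv (Phi x) =ᵐ[μ₀] fun ξ => c * I.indicator 1 ξ :=
        hrn3.filter_mono hac.ae_le
      filter_upwards [hrn4, hmemI] with ξ hξ hmem
      rw [hξ, Set.indicator_of_mem hmem, Pi.one_apply, mul_one, hc, ENNReal.toReal_inv,
        ← hq, Real.log_inv]
    have hrnμ' : (fun ξ => Real.log ((μ₀.rnDeriv (Phi x) ξ).toReal))
        =ᵐ[μ₀] fun _ => -Real.log q := hrnμ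
    have hklint : Integrable (fun ξ => Real.log ((μ₀.rnDeriv (Phi x) ξ).toReal)) μ₀ :=
      (integrable_const (-Real.log q)).congr hrnμ'.symm
    have hklval : klDiv' μ₀ (Phi x) = ((-Real.log q : ℝ) : EReal) := by
      unfold klDiv'
      rw [if_pos ⟨hac, hklint⟩]
      congr 1
      rw [integral_congr_ae hrnμ]
      simp [measure_univ]
    have hfint : Integrable (fun ξ => φ (x + ξ) + l ξ) μ₀ := by
      rw [hμ₀]
      refine Integrable.smul_measure ?_ hcfin
      have hfcont : Continuous fun ξ : ℝ => φ (x + ξ) + l ξ :=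
        (hφcont.comp (continuous_const.add continuous_id)).add (cont_of_abs_lip hl.l_lip)
      rw [hIdef]
      exact hfcont.integrableOn_Icc
    have hfle : ∀ ξ ∈ I, φ (x + ξ) + l ξ ≤ Mcl l φ x + ε / 2 := by
      intro ξ hξ
      rw [hIdef] at hξ
      obtain ⟨hg1, hg2⟩ := hξ
      have hd : |ξ - ξ₀| ≤ η := by rw [abs_le]; constructor <;> linarith
      have h1 : |φ (x + ξ) - φ (x + ξ₀)| ≤ Lφ * |ξ - ξ₀| := by
        have := hLφ (x + ξ) (x + ξ₀)
        simpa [show x + ξ - (x + ξ₀) = ξ - ξ₀ by ring] using this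
      have h2 := hl.l_lip ξ ξ₀
      have hmul1 : Lφ * |ξ - ξ₀| ≤ Lφ * η := mul_le_mul_of_nonneg_left hd hLφ0
      have hmul2 : Ll * |ξ - ξ₀| ≤ Ll * η := mul_le_mul_of_nonneg_left hd hl.Ll_pos.le
      have hAη : (Lφ + Ll) * η ≤ ε / 4 := by
        have hη2 : η ≤ ε / (4 * A) := by rw [hη]; exact min_le_right _ _
        have h3 : (Lφ + Ll) * η ≤ A * η :=
          mul_le_mul_of_nonneg_right (by rw [hA]; linarith [hl.Ll_pos]) hη0.le
        have h4 : A * η ≤ A * (ε / (4 * A)) := mul_le_mul_of_nonneg_left hη2 hA0.le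
        have h5 : A * (ε / (4 * A)) = ε / 4 := by field_simp
        linarith
      have habs1 := abs_le.mp h1
      have habs2 := abs_le.mp h2
      linarith [habs1.2, habs2.2]
    have hintle : ∫ ξ, (φ (x + ξ) + l ξ) ∂μ₀ ≤ Mcl l φ x + ε / 2 := by
      have hmono : ∀ᵐ ξ ∂μ₀, φ (x + ξ) + l ξ ≤ Mcl l φ x + ε / 2 :=
        hmemI.mono fun ξ h => hfle ξ h
      calc ∫ ξ, (φ (x + ξ) + l ξ) ∂μ₀ ≤ ∫ _, (Mcl l φ x + ε / 2) ∂μ₀ :=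
            integral_mono_ae hfint (integrable_const _) hmono
        _ = Mcl l φ x + ε / 2 := by simp [measure_univ]
    have hle : Mlam l lam φ x ≤ eInt (fun ξ => φ (x + ξ) + l ξ) μ₀
        + (lam : EReal) * klDiv' μ₀ (Phi x) := by
      unfold Mlam
      exact iInf_le _ (⟨μ₀, hprob, hac⟩ : {μ : Measure ℝ // IsProbabilityMeasure μ ∧ μ ≪ Phi x})
    have heq : eInt (fun ξ => φ (x + ξ) + l ξ) μ₀
        = ((∫ ξ, (φ (x + ξ) + l ξ) ∂μ₀ : ℝ) : EReal) := by
      unfold eInt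
      rw [if_pos hfint]
    rw [heq, hklval, ← EReal.coe_mul, ← EReal.coe_add] at hle
    refine hle.trans ?_
    rw [EReal.coe_le_coe_iff]
    have hlog1 : -Real.log q ≤ D := by
      have hll := Real.log_le_log hp0 hpq
      have hmax : Real.log p⁻¹ ≤ max (Real.log p⁻¹) 0 := le_max_left _ _
      have hinv : Real.log p⁻¹ = -Real.log p := Real.log_inv p
      rw [hD]; linarith
    have h2 : lam * (-Real.log q) ≤ lam * D := mul_le_mul_of_nonneg_left hlog1 hlam.le
    have h3 : lam * D ≤ (ε / 2 / D) * D := mul_le_mul_of_nonneg_right hlamδ.le hD0.le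
    have h4 : (ε / 2 / D) * D = ε / 2 := by field_simp
    linarith
  · -- lower bound
    refine le_iInf fun μ => ?_
    haveI hμprob : IsProbabilityMeasure μ.1 := μ.2.1
    have hμac : μ.1 ≪ Phi x := μ.2.2
    have h0 : (0 : EReal) ≤ (lam : EReal) * klDiv' μ.1 (Phi x) := by
      unfold klDiv'
      split_ifs with hcase
      · have h := gibbs_nonneg μ.1 (Phi x) hcase.1 hcase.2
        rw [← EReal.coe_mul]
        exact_mod_cast mul_nonneg hlam.le h
      · rw [EReal.mul_top_of_pos (by exact_mod_cast hlam)]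
        exact le_top
    have h1 : ((Mcl l φ x - ε : ℝ) : EReal) ≤ eInt (fun ξ => φ (x + ξ) + l ξ) μ.1 := by
      unfold eInt
      split_ifs with hcase
      · rw [EReal.coe_le_coe_iff]
        have hmono : Mcl l φ x ≤ ∫ ξ, (φ (x + ξ) + l ξ) ∂μ.1 := by
          have hμc := integral_mono (μ := μ.1) (integrable_const (Mcl l φ x)) hcase
            (fun ξ => hMcl_le x ξ)
          simpa [measure_univ] using hμc
        linarith
      · exact le_top
    calc ((Mcl l φ x - ε : ℝ) : EReal) ≤ eInt (fun ξ => φ (x + ξ) + l ξ) μ.1 := h1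
      _ = eInt (fun ξ => φ (x + ξ) + l ξ) μ.1 + 0 := (add_zero _).symm
      _ ≤ eInt (fun ξ => φ (x + ξ) + l ξ) μ.1 + (lam : EReal) * klDiv' μ.1 (Phi x) :=
          add_le_add le_rfl h0
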